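/- Let (B,X,⊲,⊲',*) be a shadow biquandle such that X is strongly connected, let [x,y,z] = y*((x↘z) ⊲' (x↘y)) be the corresponding horizontal-tribracket, and let n≥2. Let C_n^sb be the free abelian group on X×Bⁿ with boundary ∂_n^sb(x,a₁,…,a_n) = Σ_{i=1}^{n} (−1)^i [ (x,a₁,…,a_{i−1},a_{i+1},…,a_n) − (x*a_i, a₁⊲a_i,…,a_{i−1}⊲a_i, a_{i+1}⊲'a_i,…,a_n⊲'a_i) ], and let C_n^lb be the free abelian group on X×Xⁿ with boundary ∂_n^lb(x,y₁,…,y_n) = Σ_{i=1}^{n} (−1)^i [ (x,y₁,…,y_{i−1},y_{i+1},…,y_n) − (y_i, [x,y₁,y_i],…,[x,y_{i−1},y_i], [x,y_i,y_{i+1}],…,[x,y_i,y_n]) ]. Let μ_n : C_n^sb → C_n^lb be the homomorphism induced by μ_n(x,a₁,…,a_n) = (x, x*a₁,…,x*a_n) on generators. Then μ_{n−1}∘∂_n^sb = ∂_n^lb∘μ_n. -/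

import Mathlib

/-- A biquandle: a set `B` with two binary operations `ut` (the under operation `⊲`)
and `ot` (the over operation `⊲'`) satisfying the biquandle axioms. -/
structure Biquandle (B : Type*) where
  ut : B → B → B
  ot : B → B → B
  diag : ∀ a, ut a a = ot a a
  ut_bij : ∀ b, Function.Bijective fun a => ut a b
  ot_bij : ∀ b, Function.Bijective fun a => ot a b
  S_bij : Function.Bijective fun p : B × B => (ot p.2 p.1, ut p.1 p.2)
  ex1 : ∀ a b c, ut (ut a b) (ut c b) = ut (ut a c) (ot b c)
  ex2 : ∀ a b c, ot (ut a b) (ut c b) = ut (ot a c) (ot b c)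
  ex3 : ∀ a b c, ot (ot a b) (ot c b) = ot (ot a c) (ut b c)

/-- The inverse `a ⊲⁻¹ b` of the bijection `·⊲b` of a biquandle. -/
noncomputable def Biquandle.utInv {B : Type*} (bq : Biquandle B) (a b : B) : B :=
  (Equiv.ofBijective _ (bq.ut_bij b)).symm a

/-- The inverse `a ⊲'⁻¹ b` of the bijection `·⊲'b` of a biquandle. -/
noncomputable def Biquandle.otInv {B : Type*} (bq : Biquandle B) (a b : B) : B :=
  (Equiv.ofBijective _ (bq.ot_bij b)).symm a

/-- A `B`-set for a biquandle `bq` on `B`: a set `X` with an action `act = *`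
such that each `·*a` is a bijection of `X` and `(x*a)*(b⊲'a) = (x*b)*(a⊲b)`. -/
structure BSet {B : Type*} (bq : Biquandle B) (X : Type*) where
  act : X → B → X
  act_bij : ∀ a, Function.Bijective fun x => act x a
  compat : ∀ x a b, act (act x a) (bq.ot b a) = act (act x b) (bq.ut a b)

/-- The inverse `x *⁻¹ a` of the bijection `·*a` of a `B`-set. -/
noncomputable def BSet.actInv {B : Type*} {bq : Biquandle B} {X : Type*}
    (bs : BSet bq X) (x : X) (a : B) : X :=
  (Equiv.ofBijective _ (bs.act_bij a)).symm x

/-- A `B`-set is strongly connected if for each `x` the map `a ↦ x*a` is a bijection `B → X`. -/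
def BSet.StronglyConnected {B : Type*} {bq : Biquandle B} {X : Type*} (bs : BSet bq X) : Prop :=
  ∀ x, Function.Bijective fun a => bs.act x a

/-- For a strongly connected `B`-set, `x ↘ y` is the unique `a ∈ B` with `x*a = y`. -/
noncomputable def BSet.sd {B : Type*} {bq : Biquandle B} {X : Type*} (bs : BSet bq X)
    (h : bs.StronglyConnected) (x y : X) : B :=
  (Equiv.ofBijective _ (h x)).symm y

/-- The corresponding horizontal-tribracket of a shadow biquandle with strongly connected
`B`-set: `[x,y,z] = y*((x↘z) ⊲' (x↘y))`. -/
noncomputable def BSet.tribr {B X : Type*} {bq : Biquandle B} (bs : BSet bq X)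
    (h : bs.StronglyConnected) (x y z : X) : X :=
  bs.act y (bq.ot (bs.sd h x z) (bs.sd h x y))

/-- Deletion of the `i`-th entry of an `n`-tuple. -/
def delTuple {α : Type*} {n : ℕ} (i : Fin n) (f : Fin n → α) : Fin (n - 1) → α :=
  fun j =>
    if h : (j : ℕ) < (i : ℕ) then f ⟨j, by have := i.isLt; omega⟩
    else f ⟨(j : ℕ) + 1, by have := j.isLt; omega⟩

/-- The twisted tuple `(a₁⊲a_i, …, a_{i-1}⊲a_i, a_{i+1}⊲'a_i, …, a_n⊲'a_i)` appearing in
the shadow biquandle boundary. -/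
def sbTwist {B : Type*} (bq : Biquandle B) {n : ℕ} (f : Fin n → B) (i : Fin n) :
    Fin (n - 1) → B :=
  fun j =>
    if h : (j : ℕ) < (i : ℕ) then bq.ut (f ⟨j, by have := i.isLt; omega⟩) (f i)
    else bq.ot (f ⟨(j : ℕ) + 1, by have := j.isLt; omega⟩) (f i)

/-- The twisted tuple `([x,y₁,y_i], …, [x,y_{i-1},y_i], [x,y_i,y_{i+1}], …, [x,y_i,y_n])`
appearing in the local biquandle boundary. -/
def lbTwist {X : Type*} (tb : X → X → X → X) {n : ℕ} (x : X) (f : Fin n → X) (i : Fin n) :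
    Fin (n - 1) → X :=
  fun j =>
    if h : (j : ℕ) < (i : ℕ) then tb x (f ⟨j, by have := i.isLt; omega⟩) (f i)
    else tb x (f i) (f ⟨(j : ℕ) + 1, by have := j.isLt; omega⟩)

/-- The shadow biquandle boundary
`∂_n^sb(x,a₁,…,a_n) = Σ_i (-1)^i [(x,a₁,…,â_i,…,a_n) - (x*a_i, a₁⊲a_i,…,a_{i-1}⊲a_i,
a_{i+1}⊲'a_i,…,a_n⊲'a_i)]` on the free abelian group on `X × Bⁿ`. -/
noncomputable def sbBoundary {B X : Type*} (bq : Biquandle B) (bs : BSet bq X) (n : ℕ) :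
    FreeAbelianGroup (X × (Fin n → B)) →+ FreeAbelianGroup (X × (Fin (n - 1) → B)) :=
  FreeAbelianGroup.lift fun p =>
    ∑ i : Fin n, ((-1 : ℤ) ^ ((i : ℕ) + 1)) •
      (FreeAbelianGroup.of (p.1, delTuple i p.2)
        - FreeAbelianGroup.of (bs.act p.1 (p.2 i), sbTwist bq p.2 i))

/-- The local biquandle boundary
`∂_n^lb(x,y₁,…,y_n) = Σ_i (-1)^i [(x,y₁,…,ŷ_i,…,y_n) - (y_i, [x,y₁,y_i],…,[x,y_{i-1},y_i],
[x,y_i,y_{i+1}],…,[x,y_i,y_n])]` on the free abelian group on `X × Xⁿ`. -/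
noncomputable def lbBoundary {X : Type*} (tb : X → X → X → X) (n : ℕ) :
    FreeAbelianGroup (X × (Fin n → X)) →+ FreeAbelianGroup (X × (Fin (n - 1) → X)) :=
  FreeAbelianGroup.lift fun p =>
    ∑ i : Fin n, ((-1 : ℤ) ^ ((i : ℕ) + 1)) •
      (FreeAbelianGroup.of (p.1, delTuple i p.2)
        - FreeAbelianGroup.of (p.2 i, lbTwist tb p.1 p.2 i))

/-- The homomorphism `μ_n` induced on free abelian groups by
`μ_n(x,a₁,…,a_n) = (x, x*a₁, …, x*a_n)`. -/
noncomputable def muHom {B X : Type*} {bq : Biquandle B} (bs : BSet bq X) (n : ℕ) :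
    FreeAbelianGroup (X × (Fin n → B)) →+ FreeAbelianGroup (X × (Fin n → X)) :=
  FreeAbelianGroup.lift fun p =>
    FreeAbelianGroup.of (p.1, fun i => bs.act p.1 (p.2 i))


lemma sd_act {B X : Type*} {bq : Biquandle B} (bs : BSet bq X)
    (h : bs.StronglyConnected) (x : X) (a : B) : bs.sd h x (bs.act x a) = a :=
  (Equiv.ofBijective _ (h x)).symm_apply_apply a

lemma tribr_act {B X : Type*} {bq : Biquandle B} (bs : BSet bq X)
    (h : bs.StronglyConnected) (x : X) (a b : B) :
    bs.tribr h x (bs.act x a) (bs.act x b) = bs.act (bs.act x a) (bq.ot b a) := by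
  simp [BSet.tribr, sd_act]

/-- Part of Lemma 4.3: `μ` is a chain map, i.e. `μ_{n-1} ∘ ∂_n^sb = ∂_n^lb ∘ μ_n` for
`n ≥ 2`, where `∂^lb` is taken for the corresponding horizontal-tribracket
`[x,y,z] = y*((x↘z) ⊲' (x↘y))` of a shadow biquandle with strongly connected `X`. -/
theorem muHom_chain_map {B X : Type*} (bq : Biquandle B) (bs : BSet bq X)
    (h : bs.StronglyConnected) (n : ℕ) (hn : 2 ≤ n) :
    (muHom bs (n - 1)).comp (sbBoundary bq bs n)
      = (lbBoundary (bs.tribr h) n).comp (muHom bs n) := by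
  ext p
  obtain ⟨x, a⟩ := p
  simp only [AddMonoidHom.comp_apply, sbBoundary, muHom, lbBoundary,
    FreeAbelianGroup.lift_apply_of, map_sum, map_zsmul, map_sub]
  refine Finset.sum_congr rfl fun i _ => ?_
  congr 1
  congr 1
  · congr 1
    refine Prod.ext rfl ?_
    funext j
    show bs.act x (delTuple i a j) = delTuple i (fun i => bs.act x (a i)) j
    simp only [delTuple]
    split <;> rfl
  · congr 1
    refine Prod.ext rfl ?_
    dsimp only
    funext j
    show bs.act (bs.act x (a i)) (sbTwist bq a i j)
      = lbTwist (bs.tribr h) x (fun i => bs.act x (a i)) i j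
    simp only [sbTwist, lbTwist]
    split
    · rw [tribr_act, bs.compat]
    · rw [tribr_act]
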